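/- Let V be a finite ground set, let k be a natural number, and let F : P_{≤k}(V) → ℝ^m be a MAS function. Then for every monotone multiset-to-vector function f : P_{≤k}(V) → ℝ^s there exists a monotone vector-to-vector function M : ℝ^m → ℝ^s such that f(S) = M(F(S)) for all S ∈ P_{≤k}(V). -/

import Mathlib

/-- Universality: for a finite ground set `V` and a MAS function
`F : P_{≤k}(V) → ℝ^m`, every monotone multiset-to-vector function
`f : P_{≤k}(V) → ℝ^s` factors as `f = M ∘ F` for some monotone
vector-to-vector function `M : ℝ^m → ℝ^s`. -/
theorem stmt14 (V : Type*) [Fintype V] (k m s : ℕ)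
    (F : {S : Multiset V // Multiset.card S ≤ k} → Fin m → ℝ)
    (hmono : ∀ S T, S.val ≤ T.val → F S ≤ F T)
    (hsep : ∀ S T, F S ≤ F T → S.val ≤ T.val)
    (f : {S : Multiset V // Multiset.card S ≤ k} → Fin s → ℝ)
    (hf : ∀ S T, S.val ≤ T.val → f S ≤ f T) :
    ∃ M : (Fin m → ℝ) → (Fin s → ℝ), Monotone M ∧ ∀ S, f S = M (F S) := by
  classical
  have hfin : Finite {S : Multiset V // Multiset.card S ≤ k} := by
    apply Finite.of_surjective
      (f := fun p : Σ j : Fin (k+1), (Fin j → V) =>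
        (⟨(List.ofFn p.2 : List V), by
          simp only [Multiset.coe_card, List.length_ofFn]
          omega⟩ : {S : Multiset V // Multiset.card S ≤ k}))
    rintro ⟨S, hS⟩
    refine ⟨⟨⟨S.toList.length, by simp [Multiset.length_toList]; omega⟩,
      S.toList.get⟩, ?_⟩
    apply Subtype.ext
    exact (congrArg (fun l : List V => (l : Multiset V)) (List.ofFn_getElem : List.ofFn (fun i : Fin S.toList.length => S.toList[(i : ℕ)]) = S.toList)).trans (Multiset.coe_toList S)
  have : Fintype {S : Multiset V // Multiset.card S ≤ k} := Fintype.ofFinite _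
  have hne : (Finset.univ : Finset {S : Multiset V // Multiset.card S ≤ k}).Nonempty :=
    ⟨⟨0, by simp⟩, Finset.mem_univ _⟩
  set A : (Fin m → ℝ) → Finset {S : Multiset V // Multiset.card S ≤ k} :=
    fun x => Finset.univ.filter (fun T => F T ≤ x) with hA
  refine ⟨fun x i => if h : (A x).Nonempty then (A x).sup' h (fun T => f T i)
      else Finset.univ.inf' hne (fun T => f T i), ?_, ?_⟩
  · intro x y hxy i
    have hsub : A x ⊆ A y := by
      intro T hT
      simp only [hA, Finset.mem_filter] at *
      exact ⟨hT.1, hT.2.trans hxy⟩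
    by_cases hx : (A x).Nonempty
    · have hy : (A y).Nonempty := hx.mono hsub
      simp only [dif_pos hx, dif_pos hy]
      exact Finset.sup'_mono _ hsub hx
    · simp only [dif_neg hx]
      by_cases hy : (A y).Nonempty
      · simp only [dif_pos hy]
        obtain ⟨T, hT⟩ := hy
        exact le_trans (Finset.inf'_le _ (Finset.mem_univ T)) (Finset.le_sup' (fun T => f T i) hT)
      · simp only [dif_neg hy]
        exact le_refl _
  · intro S
    have hSmem : S ∈ A (F S) := by simp [hA]
    have hx : (A (F S)).Nonempty := ⟨S, hSmem⟩
    funext i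
    simp only [dif_pos hx]
    apply le_antisymm
    · exact Finset.le_sup' (fun T => f T i) hSmem
    · apply Finset.sup'_le
      intro T hT
      simp only [hA, Finset.mem_filter] at hT
      exact hf T S (hsep T S hT.2) i
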